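/- In the E6 configuration of 36 projective lines there are exactly 135 sets of 4 mutually orthogonal lines and no sets of 5 mutually orthogonal lines; in particular the E6 configuration is not saturated. -/

import Mathlib

/-- Vectors `(x; y; z) ∈ ℝ⁹` written as three blocks of three coordinates. -/
abbrev V9 : Type := Fin 3 → Fin 3 → ℝ

/-- The vector with blocks `a`, `b`, `c`. -/
def blk (a b c : Fin 3 → ℝ) : V9 := ![a, b, c]

/-- The standard inner product on `ℝ⁹`. -/
def dot9 (v w : V9) : ℝ := ∑ b, ∑ p, v b p * w b p

/-- The projective line (ray) spanned by a vector. -/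
def ray9 (v : V9) : Submodule ℝ V9 := Submodule.span ℝ {v}

/-- Orthogonality of subspaces of `ℝ⁹`. -/
def Perp9 (L M : Submodule ℝ V9) : Prop := ∀ x ∈ L, ∀ y ∈ M, dot9 x y = 0

/-- The three vectors `(1,−1,0)`, `(1,0,−1)`, `(0,1,−1)`. -/
def xis : Set (Fin 3 → ℝ) := {![1, -1, 0], ![1, 0, -1], ![0, 1, -1]}

/-- The three vectors `(2,−1,−1)`, `(−1,2,−1)`, `(−1,−1,2)`. -/
def etas : Set (Fin 3 → ℝ) := {![2, -1, -1], ![-1, 2, -1], ![-1, -1, 2]}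

/-- The 72 roots of `E6`, modeled in the subspace
`R = {(x;y;z) : Σxᵢ = Σyⱼ = Σzₖ = 0}` of `ℝ⁹`: the 9 vectors `(ξ;0;0)`, `(0;ξ;0)`,
`(0;0;ξ)` with `ξ ∈ xis`, the 27 vectors `(1/3)(ξ;η;ζ)` with `ξ,η,ζ ∈ etas`, and the
negatives of all of these. -/
def E6roots : Set V9 :=
  {v | ∃ w : V9, (v = w ∨ v = -w) ∧
    ((∃ ξ ∈ xis, w = blk ξ 0 0 ∨ w = blk 0 ξ 0 ∨ w = blk 0 0 ξ) ∨
     (∃ ξ ∈ etas, ∃ η ∈ etas, ∃ ζ ∈ etas, w = ((1 : ℝ) / 3) • blk ξ η ζ))}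

/-- The 36 projective lines of the `E6` configuration. -/
def E6lines : Set (Submodule ℝ V9) := ray9 '' E6roots

def ireps : Fin 36 → Fin 3 → Fin 3 → ℤ :=
  ![![![1, -1, 0], ![0, 0, 0], ![0, 0, 0]],
    ![![1, 0, -1], ![0, 0, 0], ![0, 0, 0]],
    ![![0, 1, -1], ![0, 0, 0], ![0, 0, 0]],
    ![![0, 0, 0], ![1, -1, 0], ![0, 0, 0]],
    ![![0, 0, 0], ![1, 0, -1], ![0, 0, 0]],
    ![![0, 0, 0], ![0, 1, -1], ![0, 0, 0]],
    ![![0, 0, 0], ![0, 0, 0], ![1, -1, 0]],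
    ![![0, 0, 0], ![0, 0, 0], ![1, 0, -1]],
    ![![0, 0, 0], ![0, 0, 0], ![0, 1, -1]],
    ![![2, -1, -1], ![2, -1, -1], ![2, -1, -1]],
    ![![2, -1, -1], ![2, -1, -1], ![-1, 2, -1]],
    ![![2, -1, -1], ![2, -1, -1], ![-1, -1, 2]],
    ![![2, -1, -1], ![-1, 2, -1], ![2, -1, -1]],
    ![![2, -1, -1], ![-1, 2, -1], ![-1, 2, -1]],
    ![![2, -1, -1], ![-1, 2, -1], ![-1, -1, 2]],
    ![![2, -1, -1], ![-1, -1, 2], ![2, -1, -1]],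
    ![![2, -1, -1], ![-1, -1, 2], ![-1, 2, -1]],
    ![![2, -1, -1], ![-1, -1, 2], ![-1, -1, 2]],
    ![![-1, 2, -1], ![2, -1, -1], ![2, -1, -1]],
    ![![-1, 2, -1], ![2, -1, -1], ![-1, 2, -1]],
    ![![-1, 2, -1], ![2, -1, -1], ![-1, -1, 2]],
    ![![-1, 2, -1], ![-1, 2, -1], ![2, -1, -1]],
    ![![-1, 2, -1], ![-1, 2, -1], ![-1, 2, -1]],
    ![![-1, 2, -1], ![-1, 2, -1], ![-1, -1, 2]],
    ![![-1, 2, -1], ![-1, -1, 2], ![2, -1, -1]],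
    ![![-1, 2, -1], ![-1, -1, 2], ![-1, 2, -1]],
    ![![-1, 2, -1], ![-1, -1, 2], ![-1, -1, 2]],
    ![![-1, -1, 2], ![2, -1, -1], ![2, -1, -1]],
    ![![-1, -1, 2], ![2, -1, -1], ![-1, 2, -1]],
    ![![-1, -1, 2], ![2, -1, -1], ![-1, -1, 2]],
    ![![-1, -1, 2], ![-1, 2, -1], ![2, -1, -1]],
    ![![-1, -1, 2], ![-1, 2, -1], ![-1, 2, -1]],
    ![![-1, -1, 2], ![-1, 2, -1], ![-1, -1, 2]],
    ![![-1, -1, 2], ![-1, -1, 2], ![2, -1, -1]],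
    ![![-1, -1, 2], ![-1, -1, 2], ![-1, 2, -1]],
    ![![-1, -1, 2], ![-1, -1, 2], ![-1, -1, 2]]]

def adjE6 : Fin 36 → Fin 36 → Bool :=
  ![![false, false, false, true, true, true, true, true, true, false, false, false, false, false, false, false, false, false, false, false, false, false, false, false, false, false, false, true, true, true, true, true, true, true, true, true],
    ![false, false, false, true, true, true, true, true, true, false, false, false, false, false, false, false, false, false, true, true, true, true, true, true, true, true, true, false, false, false, false, false, false, false, false, false],
    ![false, false, false, true, true, true, true, true, true, true, true, true, true, true, true, true, true, true, false, false, false, false, false, false, false, false, false, false, false, false, false, false, false, false, false, false],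
    ![true, true, true, false, false, false, true, true, true, false, false, false, false, false, false, true, true, true, false, false, false, false, false, false, true, true, true, false, false, false, false, false, false, true, true, true],
    ![true, true, true, false, false, false, true, true, true, false, false, false, true, true, true, false, false, false, false, false, false, true, true, true, false, false, false, false, false, false, true, true, true, false, false, false],
    ![true, true, true, false, false, false, true, true, true, true, true, true, false, false, false, false, false, false, true, true, true, false, false, false, false, false, false, true, true, true, false, false, false, false, false, false],
    ![true, true, true, true, true, true, false, false, false, false, false, true, false, false, true, false, false, true, false, false, true, false, false, true, false, false, true, false, false, true, false, false, true, false, false, true],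
    ![true, true, true, true, true, true, false, false, false, false, true, false, false, true, false, false, true, false, false, true, false, false, true, false, false, true, false, false, true, false, false, true, false, false, true, false],
    ![true, true, true, true, true, true, false, false, false, true, false, false, true, false, false, true, false, false, true, false, false, true, false, false, true, false, false, true, false, false, true, false, false, true, false, false],
    ![false, false, true, false, false, true, false, false, true, false, false, false, false, true, true, false, true, true, false, true, true, true, false, false, true, false, false, false, true, true, true, false, false, true, false, false],
    ![false, false, true, false, false, true, false, true, false, false, false, false, true, false, true, true, false, true, true, false, true, false, true, false, false, true, false, true, false, true, false, true, false, false, true, false],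
    ![false, false, true, false, false, true, true, false, false, false, false, false, true, true, false, true, true, false, true, true, false, false, false, true, false, false, true, true, true, false, false, false, true, false, false, true],
    ![false, false, true, false, true, false, false, false, true, false, true, true, false, false, false, false, true, true, true, false, false, false, true, true, true, false, false, true, false, false, false, true, true, true, false, false],
    ![false, false, true, false, true, false, false, true, false, true, false, true, false, false, false, true, false, true, false, true, false, true, false, true, false, true, false, false, true, false, true, false, true, false, true, false],
    ![false, false, true, false, true, false, true, false, false, true, true, false, false, false, false, true, true, false, false, false, true, true, true, false, false, false, true, false, false, true, true, true, false, false, false, true],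
    ![false, false, true, true, false, false, false, false, true, false, true, true, false, true, true, false, false, false, true, false, false, true, false, false, false, true, true, true, false, false, true, false, false, false, true, true],
    ![false, false, true, true, false, false, false, true, false, true, false, true, true, false, true, false, false, false, false, true, false, false, true, false, true, false, true, false, true, false, false, true, false, true, false, true],
    ![false, false, true, true, false, false, true, false, false, true, true, false, true, true, false, false, false, false, false, false, true, false, false, true, true, true, false, false, false, true, false, false, true, true, true, false],
    ![false, true, false, false, false, true, false, false, true, false, true, true, true, false, false, true, false, false, false, false, false, false, true, true, false, true, true, false, true, true, true, false, false, true, false, false],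
    ![false, true, false, false, false, true, false, true, false, true, false, true, false, true, false, false, true, false, false, false, false, true, false, true, true, false, true, true, false, true, false, true, false, false, true, false],
    ![false, true, false, false, false, true, true, false, false, true, true, false, false, false, true, false, false, true, false, false, false, true, true, false, true, true, false, true, true, false, false, false, true, false, false, true],
    ![false, true, false, false, true, false, false, false, true, true, false, false, false, true, true, true, false, false, false, true, true, false, false, false, false, true, true, true, false, false, false, true, true, true, false, false],
    ![false, true, false, false, true, false, false, true, false, false, true, false, true, false, true, false, true, false, true, false, true, false, false, false, true, false, true, false, true, false, true, false, true, false, true, false],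
    ![false, true, false, false, true, false, true, false, false, false, false, true, true, true, false, false, false, true, true, true, false, false, false, false, true, true, false, false, false, true, true, true, false, false, false, true],
    ![false, true, false, true, false, false, false, false, true, true, false, false, true, false, false, false, true, true, false, true, true, false, true, true, false, false, false, true, false, false, true, false, false, false, true, true],
    ![false, true, false, true, false, false, false, true, false, false, true, false, false, true, false, true, false, true, true, false, true, true, false, true, false, false, false, false, true, false, false, true, false, true, false, true],
    ![false, true, false, true, false, false, true, false, false, false, false, true, false, false, true, true, true, false, true, true, false, true, true, false, false, false, false, false, false, true, false, false, true, true, true, false],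
    ![true, false, false, false, false, true, false, false, true, false, true, true, true, false, false, true, false, false, false, true, true, true, false, false, true, false, false, false, false, false, false, true, true, false, true, true],
    ![true, false, false, false, false, true, false, true, false, true, false, true, false, true, false, false, true, false, true, false, true, false, true, false, false, true, false, false, false, false, true, false, true, true, false, true],
    ![true, false, false, false, false, true, true, false, false, true, true, false, false, false, true, false, false, true, true, true, false, false, false, true, false, false, true, false, false, false, true, true, false, true, true, false],
    ![true, false, false, false, true, false, false, false, true, true, false, false, false, true, true, true, false, false, true, false, false, false, true, true, true, false, false, false, true, true, false, false, false, false, true, true],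
    ![true, false, false, false, true, false, false, true, false, false, true, false, true, false, true, false, true, false, false, true, false, true, false, true, false, true, false, true, false, true, false, false, false, true, false, true],
    ![true, false, false, false, true, false, true, false, false, false, false, true, true, true, false, false, false, true, false, false, true, true, true, false, false, false, true, true, true, false, false, false, false, true, true, false],
    ![true, false, false, true, false, false, false, false, true, true, false, false, true, false, false, false, true, true, true, false, false, true, false, false, false, true, true, false, true, true, false, true, true, false, false, false],
    ![true, false, false, true, false, false, false, true, false, false, true, false, false, true, false, true, false, true, false, true, false, false, true, false, true, false, true, true, false, true, true, false, true, false, false, false],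
    ![true, false, false, true, false, false, true, false, false, false, false, true, false, false, true, true, true, false, false, false, true, false, false, true, true, true, false, true, true, false, true, true, false, false, false, false]]

def quadsList : List (Finset (Fin 36)) :=
  [({0,3,6,35} : Finset (Fin 36)),
   ({0,3,7,34} : Finset (Fin 36)),
   ({0,3,8,33} : Finset (Fin 36)),
   ({0,4,6,32} : Finset (Fin 36)),
   ({0,4,7,31} : Finset (Fin 36)),
   ({0,4,8,30} : Finset (Fin 36)),
   ({0,5,6,29} : Finset (Fin 36)),
   ({0,5,7,28} : Finset (Fin 36)),
   ({0,5,8,27} : Finset (Fin 36)),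
   ({0,27,31,35} : Finset (Fin 36)),
   ({0,27,32,34} : Finset (Fin 36)),
   ({0,28,30,35} : Finset (Fin 36)),
   ({0,28,32,33} : Finset (Fin 36)),
   ({0,29,30,34} : Finset (Fin 36)),
   ({0,29,31,33} : Finset (Fin 36)),
   ({1,3,6,26} : Finset (Fin 36)),
   ({1,3,7,25} : Finset (Fin 36)),
   ({1,3,8,24} : Finset (Fin 36)),
   ({1,4,6,23} : Finset (Fin 36)),
   ({1,4,7,22} : Finset (Fin 36)),
   ({1,4,8,21} : Finset (Fin 36)),
   ({1,5,6,20} : Finset (Fin 36)),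
   ({1,5,7,19} : Finset (Fin 36)),
   ({1,5,8,18} : Finset (Fin 36)),
   ({1,18,22,26} : Finset (Fin 36)),
   ({1,18,23,25} : Finset (Fin 36)),
   ({1,19,21,26} : Finset (Fin 36)),
   ({1,19,23,24} : Finset (Fin 36)),
   ({1,20,21,25} : Finset (Fin 36)),
   ({1,20,22,24} : Finset (Fin 36)),
   ({2,3,6,17} : Finset (Fin 36)),
   ({2,3,7,16} : Finset (Fin 36)),
   ({2,3,8,15} : Finset (Fin 36)),
   ({2,4,6,14} : Finset (Fin 36)),
   ({2,4,7,13} : Finset (Fin 36)),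
   ({2,4,8,12} : Finset (Fin 36)),
   ({2,5,6,11} : Finset (Fin 36)),
   ({2,5,7,10} : Finset (Fin 36)),
   ({2,5,8,9} : Finset (Fin 36)),
   ({2,9,13,17} : Finset (Fin 36)),
   ({2,9,14,16} : Finset (Fin 36)),
   ({2,10,12,17} : Finset (Fin 36)),
   ({2,10,14,15} : Finset (Fin 36)),
   ({2,11,12,16} : Finset (Fin 36)),
   ({2,11,13,15} : Finset (Fin 36)),
   ({3,15,25,35} : Finset (Fin 36)),
   ({3,15,26,34} : Finset (Fin 36)),
   ({3,16,24,35} : Finset (Fin 36)),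
   ({3,16,26,33} : Finset (Fin 36)),
   ({3,17,24,34} : Finset (Fin 36)),
   ({3,17,25,33} : Finset (Fin 36)),
   ({4,12,22,32} : Finset (Fin 36)),
   ({4,12,23,31} : Finset (Fin 36)),
   ({4,13,21,32} : Finset (Fin 36)),
   ({4,13,23,30} : Finset (Fin 36)),
   ({4,14,21,31} : Finset (Fin 36)),
   ({4,14,22,30} : Finset (Fin 36)),
   ({5,9,19,29} : Finset (Fin 36)),
   ({5,9,20,28} : Finset (Fin 36)),
   ({5,10,18,29} : Finset (Fin 36)),
   ({5,10,20,27} : Finset (Fin 36)),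
   ({5,11,18,28} : Finset (Fin 36)),
   ({5,11,19,27} : Finset (Fin 36)),
   ({6,11,23,35} : Finset (Fin 36)),
   ({6,11,26,32} : Finset (Fin 36)),
   ({6,14,20,35} : Finset (Fin 36)),
   ({6,14,26,29} : Finset (Fin 36)),
   ({6,17,20,32} : Finset (Fin 36)),
   ({6,17,23,29} : Finset (Fin 36)),
   ({7,10,22,34} : Finset (Fin 36)),
   ({7,10,25,31} : Finset (Fin 36)),
   ({7,13,19,34} : Finset (Fin 36)),
   ({7,13,25,28} : Finset (Fin 36)),
   ({7,16,19,31} : Finset (Fin 36)),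
   ({7,16,22,28} : Finset (Fin 36)),
   ({8,9,21,33} : Finset (Fin 36)),
   ({8,9,24,30} : Finset (Fin 36)),
   ({8,12,18,33} : Finset (Fin 36)),
   ({8,12,24,27} : Finset (Fin 36)),
   ({8,15,18,30} : Finset (Fin 36)),
   ({8,15,21,27} : Finset (Fin 36)),
   ({9,13,19,21} : Finset (Fin 36)),
   ({9,13,28,30} : Finset (Fin 36)),
   ({9,14,20,21} : Finset (Fin 36)),
   ({9,14,29,30} : Finset (Fin 36)),
   ({9,16,19,24} : Finset (Fin 36)),
   ({9,16,28,33} : Finset (Fin 36)),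
   ({9,17,20,24} : Finset (Fin 36)),
   ({9,17,29,33} : Finset (Fin 36)),
   ({10,12,18,22} : Finset (Fin 36)),
   ({10,12,27,31} : Finset (Fin 36)),
   ({10,14,20,22} : Finset (Fin 36)),
   ({10,14,29,31} : Finset (Fin 36)),
   ({10,15,18,25} : Finset (Fin 36)),
   ({10,15,27,34} : Finset (Fin 36)),
   ({10,17,20,25} : Finset (Fin 36)),
   ({10,17,29,34} : Finset (Fin 36)),
   ({11,12,18,23} : Finset (Fin 36)),
   ({11,12,27,32} : Finset (Fin 36)),
   ({11,13,19,23} : Finset (Fin 36)),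
   ({11,13,28,32} : Finset (Fin 36)),
   ({11,15,18,26} : Finset (Fin 36)),
   ({11,15,27,35} : Finset (Fin 36)),
   ({11,16,19,26} : Finset (Fin 36)),
   ({11,16,28,35} : Finset (Fin 36)),
   ({12,16,22,24} : Finset (Fin 36)),
   ({12,16,31,33} : Finset (Fin 36)),
   ({12,17,23,24} : Finset (Fin 36)),
   ({12,17,32,33} : Finset (Fin 36)),
   ({13,15,21,25} : Finset (Fin 36)),
   ({13,15,30,34} : Finset (Fin 36)),
   ({13,17,23,25} : Finset (Fin 36)),
   ({13,17,32,34} : Finset (Fin 36)),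
   ({14,15,21,26} : Finset (Fin 36)),
   ({14,15,30,35} : Finset (Fin 36)),
   ({14,16,22,26} : Finset (Fin 36)),
   ({14,16,31,35} : Finset (Fin 36)),
   ({18,22,28,30} : Finset (Fin 36)),
   ({18,23,29,30} : Finset (Fin 36)),
   ({18,25,28,33} : Finset (Fin 36)),
   ({18,26,29,33} : Finset (Fin 36)),
   ({19,21,27,31} : Finset (Fin 36)),
   ({19,23,29,31} : Finset (Fin 36)),
   ({19,24,27,34} : Finset (Fin 36)),
   ({19,26,29,34} : Finset (Fin 36)),
   ({20,21,27,32} : Finset (Fin 36)),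
   ({20,22,28,32} : Finset (Fin 36)),
   ({20,24,27,35} : Finset (Fin 36)),
   ({20,25,28,35} : Finset (Fin 36)),
   ({21,25,31,33} : Finset (Fin 36)),
   ({21,26,32,33} : Finset (Fin 36)),
   ({22,24,30,34} : Finset (Fin 36)),
   ({22,26,32,34} : Finset (Fin 36)),
   ({23,24,30,35} : Finset (Fin 36)),
   ({23,25,31,35} : Finset (Fin 36))]

def goodQuads : Finset (Finset (Fin 36)) := quadsList.toFinset

def repsE6 (i : Fin 36) : V9 := fun b p => ((ireps i b p : ℤ) : ℝ)

def dzE6 (i j : Fin 36) : ℤ := ∑ b, ∑ p, ireps i b p * ireps j b p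

def fE6 (i : Fin 36) : Submodule ℝ V9 := ray9 (repsE6 i)

lemma hrep0 : repsE6 0 = blk ![1, -1, 0] 0 0 := by
  have h : ireps 0 = ![![1, -1, 0], ![0, 0, 0], ![0, 0, 0]] := by decide
  funext b p
  fin_cases b <;> fin_cases p <;>
    simp [repsE6, h, blk, Matrix.vecHead, Matrix.vecTail] <;> norm_num

lemma hrep1 : repsE6 1 = blk ![1, 0, -1] 0 0 := by
  have h : ireps 1 = ![![1, 0, -1], ![0, 0, 0], ![0, 0, 0]] := by decide
  funext b p
  fin_cases b <;> fin_cases p <;>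
    simp [repsE6, h, blk, Matrix.vecHead, Matrix.vecTail] <;> norm_num

lemma hrep2 : repsE6 2 = blk ![0, 1, -1] 0 0 := by
  have h : ireps 2 = ![![0, 1, -1], ![0, 0, 0], ![0, 0, 0]] := by decide
  funext b p
  fin_cases b <;> fin_cases p <;>
    simp [repsE6, h, blk, Matrix.vecHead, Matrix.vecTail] <;> norm_num

lemma hrep3 : repsE6 3 = blk 0 ![1, -1, 0] 0 := by
  have h : ireps 3 = ![![0, 0, 0], ![1, -1, 0], ![0, 0, 0]] := by decide
  funext b p
  fin_cases b <;> fin_cases p <;>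
    simp [repsE6, h, blk, Matrix.vecHead, Matrix.vecTail] <;> norm_num

lemma hrep4 : repsE6 4 = blk 0 ![1, 0, -1] 0 := by
  have h : ireps 4 = ![![0, 0, 0], ![1, 0, -1], ![0, 0, 0]] := by decide
  funext b p
  fin_cases b <;> fin_cases p <;>
    simp [repsE6, h, blk, Matrix.vecHead, Matrix.vecTail] <;> norm_num

lemma hrep5 : repsE6 5 = blk 0 ![0, 1, -1] 0 := by
  have h : ireps 5 = ![![0, 0, 0], ![0, 1, -1], ![0, 0, 0]] := by decide
  funext b p
  fin_cases b <;> fin_cases p <;>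
    simp [repsE6, h, blk, Matrix.vecHead, Matrix.vecTail] <;> norm_num

lemma hrep6 : repsE6 6 = blk 0 0 ![1, -1, 0] := by
  have h : ireps 6 = ![![0, 0, 0], ![0, 0, 0], ![1, -1, 0]] := by decide
  funext b p
  fin_cases b <;> fin_cases p <;>
    simp [repsE6, h, blk, Matrix.vecHead, Matrix.vecTail] <;> norm_num

lemma hrep7 : repsE6 7 = blk 0 0 ![1, 0, -1] := by
  have h : ireps 7 = ![![0, 0, 0], ![0, 0, 0], ![1, 0, -1]] := by decide
  funext b p
  fin_cases b <;> fin_cases p <;>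
    simp [repsE6, h, blk, Matrix.vecHead, Matrix.vecTail] <;> norm_num

lemma hrep8 : repsE6 8 = blk 0 0 ![0, 1, -1] := by
  have h : ireps 8 = ![![0, 0, 0], ![0, 0, 0], ![0, 1, -1]] := by decide
  funext b p
  fin_cases b <;> fin_cases p <;>
    simp [repsE6, h, blk, Matrix.vecHead, Matrix.vecTail] <;> norm_num

lemma hrep9 : repsE6 9 = blk ![2, -1, -1] ![2, -1, -1] ![2, -1, -1] := by
  have h : ireps 9 = ![![2, -1, -1], ![2, -1, -1], ![2, -1, -1]] := by decide
  funext b p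
  fin_cases b <;> fin_cases p <;>
    simp [repsE6, h, blk, Matrix.vecHead, Matrix.vecTail] <;> norm_num

lemma hrep10 : repsE6 10 = blk ![2, -1, -1] ![2, -1, -1] ![-1, 2, -1] := by
  have h : ireps 10 = ![![2, -1, -1], ![2, -1, -1], ![-1, 2, -1]] := by decide
  funext b p
  fin_cases b <;> fin_cases p <;>
    simp [repsE6, h, blk, Matrix.vecHead, Matrix.vecTail] <;> norm_num

lemma hrep11 : repsE6 11 = blk ![2, -1, -1] ![2, -1, -1] ![-1, -1, 2] := by
  have h : ireps 11 = ![![2, -1, -1], ![2, -1, -1], ![-1, -1, 2]] := by decide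
  funext b p
  fin_cases b <;> fin_cases p <;>
    simp [repsE6, h, blk, Matrix.vecHead, Matrix.vecTail] <;> norm_num

lemma hrep12 : repsE6 12 = blk ![2, -1, -1] ![-1, 2, -1] ![2, -1, -1] := by
  have h : ireps 12 = ![![2, -1, -1], ![-1, 2, -1], ![2, -1, -1]] := by decide
  funext b p
  fin_cases b <;> fin_cases p <;>
    simp [repsE6, h, blk, Matrix.vecHead, Matrix.vecTail] <;> norm_num

lemma hrep13 : repsE6 13 = blk ![2, -1, -1] ![-1, 2, -1] ![-1, 2, -1] := by
  have h : ireps 13 = ![![2, -1, -1], ![-1, 2, -1], ![-1, 2, -1]] := by decide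
  funext b p
  fin_cases b <;> fin_cases p <;>
    simp [repsE6, h, blk, Matrix.vecHead, Matrix.vecTail] <;> norm_num

lemma hrep14 : repsE6 14 = blk ![2, -1, -1] ![-1, 2, -1] ![-1, -1, 2] := by
  have h : ireps 14 = ![![2, -1, -1], ![-1, 2, -1], ![-1, -1, 2]] := by decide
  funext b p
  fin_cases b <;> fin_cases p <;>
    simp [repsE6, h, blk, Matrix.vecHead, Matrix.vecTail] <;> norm_num

lemma hrep15 : repsE6 15 = blk ![2, -1, -1] ![-1, -1, 2] ![2, -1, -1] := by
  have h : ireps 15 = ![![2, -1, -1], ![-1, -1, 2], ![2, -1, -1]] := by decide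
  funext b p
  fin_cases b <;> fin_cases p <;>
    simp [repsE6, h, blk, Matrix.vecHead, Matrix.vecTail] <;> norm_num

lemma hrep16 : repsE6 16 = blk ![2, -1, -1] ![-1, -1, 2] ![-1, 2, -1] := by
  have h : ireps 16 = ![![2, -1, -1], ![-1, -1, 2], ![-1, 2, -1]] := by decide
  funext b p
  fin_cases b <;> fin_cases p <;>
    simp [repsE6, h, blk, Matrix.vecHead, Matrix.vecTail] <;> norm_num

lemma hrep17 : repsE6 17 = blk ![2, -1, -1] ![-1, -1, 2] ![-1, -1, 2] := by
  have h : ireps 17 = ![![2, -1, -1], ![-1, -1, 2], ![-1, -1, 2]] := by decide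
  funext b p
  fin_cases b <;> fin_cases p <;>
    simp [repsE6, h, blk, Matrix.vecHead, Matrix.vecTail] <;> norm_num

lemma hrep18 : repsE6 18 = blk ![-1, 2, -1] ![2, -1, -1] ![2, -1, -1] := by
  have h : ireps 18 = ![![-1, 2, -1], ![2, -1, -1], ![2, -1, -1]] := by decide
  funext b p
  fin_cases b <;> fin_cases p <;>
    simp [repsE6, h, blk, Matrix.vecHead, Matrix.vecTail] <;> norm_num

lemma hrep19 : repsE6 19 = blk ![-1, 2, -1] ![2, -1, -1] ![-1, 2, -1] := by
  have h : ireps 19 = ![![-1, 2, -1], ![2, -1, -1], ![-1, 2, -1]] := by decide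
  funext b p
  fin_cases b <;> fin_cases p <;>
    simp [repsE6, h, blk, Matrix.vecHead, Matrix.vecTail] <;> norm_num

lemma hrep20 : repsE6 20 = blk ![-1, 2, -1] ![2, -1, -1] ![-1, -1, 2] := by
  have h : ireps 20 = ![![-1, 2, -1], ![2, -1, -1], ![-1, -1, 2]] := by decide
  funext b p
  fin_cases b <;> fin_cases p <;>
    simp [repsE6, h, blk, Matrix.vecHead, Matrix.vecTail] <;> norm_num

lemma hrep21 : repsE6 21 = blk ![-1, 2, -1] ![-1, 2, -1] ![2, -1, -1] := by
  have h : ireps 21 = ![![-1, 2, -1], ![-1, 2, -1], ![2, -1, -1]] := by decide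
  funext b p
  fin_cases b <;> fin_cases p <;>
    simp [repsE6, h, blk, Matrix.vecHead, Matrix.vecTail] <;> norm_num

lemma hrep22 : repsE6 22 = blk ![-1, 2, -1] ![-1, 2, -1] ![-1, 2, -1] := by
  have h : ireps 22 = ![![-1, 2, -1], ![-1, 2, -1], ![-1, 2, -1]] := by decide
  funext b p
  fin_cases b <;> fin_cases p <;>
    simp [repsE6, h, blk, Matrix.vecHead, Matrix.vecTail] <;> norm_num

lemma hrep23 : repsE6 23 = blk ![-1, 2, -1] ![-1, 2, -1] ![-1, -1, 2] := by
  have h : ireps 23 = ![![-1, 2, -1], ![-1, 2, -1], ![-1, -1, 2]] := by decide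
  funext b p
  fin_cases b <;> fin_cases p <;>
    simp [repsE6, h, blk, Matrix.vecHead, Matrix.vecTail] <;> norm_num

lemma hrep24 : repsE6 24 = blk ![-1, 2, -1] ![-1, -1, 2] ![2, -1, -1] := by
  have h : ireps 24 = ![![-1, 2, -1], ![-1, -1, 2], ![2, -1, -1]] := by decide
  funext b p
  fin_cases b <;> fin_cases p <;>
    simp [repsE6, h, blk, Matrix.vecHead, Matrix.vecTail] <;> norm_num

lemma hrep25 : repsE6 25 = blk ![-1, 2, -1] ![-1, -1, 2] ![-1, 2, -1] := by
  have h : ireps 25 = ![![-1, 2, -1], ![-1, -1, 2], ![-1, 2, -1]] := by decide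
  funext b p
  fin_cases b <;> fin_cases p <;>
    simp [repsE6, h, blk, Matrix.vecHead, Matrix.vecTail] <;> norm_num

lemma hrep26 : repsE6 26 = blk ![-1, 2, -1] ![-1, -1, 2] ![-1, -1, 2] := by
  have h : ireps 26 = ![![-1, 2, -1], ![-1, -1, 2], ![-1, -1, 2]] := by decide
  funext b p
  fin_cases b <;> fin_cases p <;>
    simp [repsE6, h, blk, Matrix.vecHead, Matrix.vecTail] <;> norm_num

lemma hrep27 : repsE6 27 = blk ![-1, -1, 2] ![2, -1, -1] ![2, -1, -1] := by
  have h : ireps 27 = ![![-1, -1, 2], ![2, -1, -1], ![2, -1, -1]] := by decide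
  funext b p
  fin_cases b <;> fin_cases p <;>
    simp [repsE6, h, blk, Matrix.vecHead, Matrix.vecTail] <;> norm_num

lemma hrep28 : repsE6 28 = blk ![-1, -1, 2] ![2, -1, -1] ![-1, 2, -1] := by
  have h : ireps 28 = ![![-1, -1, 2], ![2, -1, -1], ![-1, 2, -1]] := by decide
  funext b p
  fin_cases b <;> fin_cases p <;>
    simp [repsE6, h, blk, Matrix.vecHead, Matrix.vecTail] <;> norm_num

lemma hrep29 : repsE6 29 = blk ![-1, -1, 2] ![2, -1, -1] ![-1, -1, 2] := by
  have h : ireps 29 = ![![-1, -1, 2], ![2, -1, -1], ![-1, -1, 2]] := by decide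
  funext b p
  fin_cases b <;> fin_cases p <;>
    simp [repsE6, h, blk, Matrix.vecHead, Matrix.vecTail] <;> norm_num

lemma hrep30 : repsE6 30 = blk ![-1, -1, 2] ![-1, 2, -1] ![2, -1, -1] := by
  have h : ireps 30 = ![![-1, -1, 2], ![-1, 2, -1], ![2, -1, -1]] := by decide
  funext b p
  fin_cases b <;> fin_cases p <;>
    simp [repsE6, h, blk, Matrix.vecHead, Matrix.vecTail] <;> norm_num

lemma hrep31 : repsE6 31 = blk ![-1, -1, 2] ![-1, 2, -1] ![-1, 2, -1] := by
  have h : ireps 31 = ![![-1, -1, 2], ![-1, 2, -1], ![-1, 2, -1]] := by decide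
  funext b p
  fin_cases b <;> fin_cases p <;>
    simp [repsE6, h, blk, Matrix.vecHead, Matrix.vecTail] <;> norm_num

lemma hrep32 : repsE6 32 = blk ![-1, -1, 2] ![-1, 2, -1] ![-1, -1, 2] := by
  have h : ireps 32 = ![![-1, -1, 2], ![-1, 2, -1], ![-1, -1, 2]] := by decide
  funext b p
  fin_cases b <;> fin_cases p <;>
    simp [repsE6, h, blk, Matrix.vecHead, Matrix.vecTail] <;> norm_num

lemma hrep33 : repsE6 33 = blk ![-1, -1, 2] ![-1, -1, 2] ![2, -1, -1] := by
  have h : ireps 33 = ![![-1, -1, 2], ![-1, -1, 2], ![2, -1, -1]] := by decide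
  funext b p
  fin_cases b <;> fin_cases p <;>
    simp [repsE6, h, blk, Matrix.vecHead, Matrix.vecTail] <;> norm_num

lemma hrep34 : repsE6 34 = blk ![-1, -1, 2] ![-1, -1, 2] ![-1, 2, -1] := by
  have h : ireps 34 = ![![-1, -1, 2], ![-1, -1, 2], ![-1, 2, -1]] := by decide
  funext b p
  fin_cases b <;> fin_cases p <;>
    simp [repsE6, h, blk, Matrix.vecHead, Matrix.vecTail] <;> norm_num

lemma hrep35 : repsE6 35 = blk ![-1, -1, 2] ![-1, -1, 2] ![-1, -1, 2] := by
  have h : ireps 35 = ![![-1, -1, 2], ![-1, -1, 2], ![-1, -1, 2]] := by decide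
  funext b p
  fin_cases b <;> fin_cases p <;>
    simp [repsE6, h, blk, Matrix.vecHead, Matrix.vecTail] <;> norm_num

set_option maxRecDepth 4000000 in
set_option maxHeartbeats 40000000 in
lemma adj_eq_dz : ∀ i j : Fin 36, adjE6 i j = decide (dzE6 i j = 0) := by decide

set_option maxRecDepth 4000000 in
set_option maxHeartbeats 40000000 in
lemma cross_imp_eq : ∀ i j : Fin 36,
    (∀ b p b' p', ireps i b p * ireps j b' p' = ireps i b' p' * ireps j b p) → i = j := by
  decide

set_option maxRecDepth 4000000 in
set_option maxHeartbeats 40000000 in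
lemma bigP : ∀ a : Fin 36, ∀ b, a < b → adjE6 a b = true →
    ∀ c, b < c → adjE6 a c = true → adjE6 b c = true →
    ∀ d, c < d → adjE6 a d = true → adjE6 b d = true → adjE6 c d = true →
    ({a, b, c, d} : Finset (Fin 36)) ∈ goodQuads ∧
      ∀ e, d < e →
        ¬(adjE6 a e = true ∧ adjE6 b e = true ∧ adjE6 c e = true ∧ adjE6 d e = true) := by
  decide

set_option maxRecDepth 4000000 in
set_option maxHeartbeats 40000000 in
lemma goodQuads_card : goodQuads.card = 135 := by decide

set_option maxRecDepth 4000000 in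
set_option maxHeartbeats 40000000 in
lemma goodQuads_filter :
    goodQuads.filter (fun T => T.card = 4 ∧ ∀ i ∈ T, ∀ j ∈ T, i ≠ j → adjE6 i j = true)
      = goodQuads := by decide

lemma dot9_reps (i j : Fin 36) : dot9 (repsE6 i) (repsE6 j) = ((dzE6 i j : ℤ) : ℝ) := by
  simp only [dot9, repsE6, dzE6]
  push_cast
  rfl

lemma dot9_smul (a b : ℝ) (v w : V9) : dot9 (a • v) (b • w) = (a * b) * dot9 v w := by
  simp only [dot9, Pi.smul_apply, smul_eq_mul, Finset.mul_sum]
  exact Finset.sum_congr rfl fun _ _ => Finset.sum_congr rfl fun _ _ => by ring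

lemma perp_ray_iff (v w : V9) : Perp9 (ray9 v) (ray9 w) ↔ dot9 v w = 0 := by
  constructor
  · intro h
    exact h v (Submodule.mem_span_singleton_self v) w (Submodule.mem_span_singleton_self w)
  · intro h x hx y hy
    obtain ⟨a, rfl⟩ := Submodule.mem_span_singleton.mp hx
    obtain ⟨b, rfl⟩ := Submodule.mem_span_singleton.mp hy
    rw [dot9_smul, h, mul_zero]

lemma adj_iff (i j : Fin 36) : adjE6 i j = true ↔ dot9 (repsE6 i) (repsE6 j) = 0 := by
  rw [adj_eq_dz, dot9_reps, decide_eq_true_eq]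
  exact_mod_cast Iff.rfl

lemma fE6_inj : Function.Injective fE6 := by
  intro i j h
  have hj : repsE6 j ∈ Submodule.span ℝ {repsE6 i} := by
    have : repsE6 j ∈ ray9 (repsE6 j) := Submodule.mem_span_singleton_self _
    rw [show ray9 (repsE6 j) = fE6 j from rfl, ← h] at this
    exact this
  obtain ⟨c, hc⟩ := Submodule.mem_span_singleton.mp hj
  refine (cross_imp_eq j i fun b p b' p' => ?_).symm
  have e1 := congrFun (congrFun hc b) p
  have e2 := congrFun (congrFun hc b') p'
  simp only [Pi.smul_apply, smul_eq_mul, repsE6] at e1 e2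
  have : ((ireps j b p * ireps i b' p' : ℤ) : ℝ) = ((ireps j b' p' * ireps i b p : ℤ) : ℝ) := by
    push_cast
    rw [← e1, ← e2]
    ring
  exact_mod_cast this

lemma xis_mem0 : ![(1 : ℝ), -1, 0] ∈ xis := Set.mem_insert _ _
lemma xis_mem1 : ![(1 : ℝ), 0, -1] ∈ xis := Set.mem_insert_of_mem _ (Set.mem_insert _ _)
lemma xis_mem2 : ![(0 : ℝ), 1, -1] ∈ xis := Set.mem_insert_of_mem _ (Set.mem_insert_of_mem _ rfl)
lemma etas_mem0 : ![(2 : ℝ), -1, -1] ∈ etas := Set.mem_insert _ _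
lemma etas_mem1 : ![(-1 : ℝ), 2, -1] ∈ etas := Set.mem_insert_of_mem _ (Set.mem_insert _ _)
lemma etas_mem2 : ![(-1 : ℝ), -1, 2] ∈ etas :=
  Set.mem_insert_of_mem _ (Set.mem_insert_of_mem _ rfl)

lemma ray_mem_xi0 (ξ : Fin 3 → ℝ) (hξ : ξ ∈ xis) : ray9 (blk ξ 0 0) ∈ E6lines :=
  ⟨blk ξ 0 0, ⟨blk ξ 0 0, Or.inl rfl, Or.inl ⟨ξ, hξ, Or.inl rfl⟩⟩, rfl⟩
lemma ray_mem_xi1 (ξ : Fin 3 → ℝ) (hξ : ξ ∈ xis) : ray9 (blk 0 ξ 0) ∈ E6lines :=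
  ⟨blk 0 ξ 0, ⟨blk 0 ξ 0, Or.inl rfl, Or.inl ⟨ξ, hξ, Or.inr (Or.inl rfl)⟩⟩, rfl⟩
lemma ray_mem_xi2 (ξ : Fin 3 → ℝ) (hξ : ξ ∈ xis) : ray9 (blk 0 0 ξ) ∈ E6lines :=
  ⟨blk 0 0 ξ, ⟨blk 0 0 ξ, Or.inl rfl, Or.inl ⟨ξ, hξ, Or.inr (Or.inr rfl)⟩⟩, rfl⟩

lemma ray_third_smul (x : V9) : ray9 (((1 : ℝ) / 3) • x) = ray9 x :=
  Submodule.span_singleton_smul_eq (isUnit_iff_ne_zero.mpr (by norm_num)) x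

lemma ray_mem_eta (ξ η ζ : Fin 3 → ℝ) (hξ : ξ ∈ etas) (hη : η ∈ etas) (hζ : ζ ∈ etas) :
    ray9 (blk ξ η ζ) ∈ E6lines :=
  ⟨((1 : ℝ) / 3) • blk ξ η ζ,
    ⟨((1 : ℝ) / 3) • blk ξ η ζ, Or.inl rfl, Or.inr ⟨ξ, hξ, η, hη, ζ, hζ, rfl⟩⟩,
    ray_third_smul _⟩

lemma E6lines_eq : E6lines = Set.range fE6 := by
  apply Set.Subset.antisymm
  · rintro L ⟨v, ⟨w, hvw, hw⟩, rfl⟩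
    have hL : ray9 v = ray9 w := by
      rcases hvw with rfl | rfl
      · rfl
      · show Submodule.span ℝ {-w} = Submodule.span ℝ {w}
        rw [← Set.neg_singleton, Submodule.span_neg]
    rw [hL]
    rcases hw with ⟨ξ, hξ, hcase⟩ | ⟨ξ, hξ, η, hη, ζ, hζ, rfl⟩
    · simp only [xis, Set.mem_insert_iff, Set.mem_singleton_iff] at hξ
      rcases hξ with rfl | rfl | rfl <;> rcases hcase with rfl | rfl | rfl
      · exact ⟨0, by simp only [fE6]; rw [hrep0]⟩
      · exact ⟨3, by simp only [fE6]; rw [hrep3]⟩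
      · exact ⟨6, by simp only [fE6]; rw [hrep6]⟩
      · exact ⟨1, by simp only [fE6]; rw [hrep1]⟩
      · exact ⟨4, by simp only [fE6]; rw [hrep4]⟩
      · exact ⟨7, by simp only [fE6]; rw [hrep7]⟩
      · exact ⟨2, by simp only [fE6]; rw [hrep2]⟩
      · exact ⟨5, by simp only [fE6]; rw [hrep5]⟩
      · exact ⟨8, by simp only [fE6]; rw [hrep8]⟩
    · rw [ray_third_smul]
      simp only [etas, Set.mem_insert_iff, Set.mem_singleton_iff] at hξ hη hζ
      rcases hξ with rfl | rfl | rfl <;> rcases hη with rfl | rfl | rfl <;>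
        rcases hζ with rfl | rfl | rfl
      · exact ⟨9, by simp only [fE6]; rw [hrep9]⟩
      · exact ⟨10, by simp only [fE6]; rw [hrep10]⟩
      · exact ⟨11, by simp only [fE6]; rw [hrep11]⟩
      · exact ⟨12, by simp only [fE6]; rw [hrep12]⟩
      · exact ⟨13, by simp only [fE6]; rw [hrep13]⟩
      · exact ⟨14, by simp only [fE6]; rw [hrep14]⟩
      · exact ⟨15, by simp only [fE6]; rw [hrep15]⟩
      · exact ⟨16, by simp only [fE6]; rw [hrep16]⟩
      · exact ⟨17, by simp only [fE6]; rw [hrep17]⟩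
      · exact ⟨18, by simp only [fE6]; rw [hrep18]⟩
      · exact ⟨19, by simp only [fE6]; rw [hrep19]⟩
      · exact ⟨20, by simp only [fE6]; rw [hrep20]⟩
      · exact ⟨21, by simp only [fE6]; rw [hrep21]⟩
      · exact ⟨22, by simp only [fE6]; rw [hrep22]⟩
      · exact ⟨23, by simp only [fE6]; rw [hrep23]⟩
      · exact ⟨24, by simp only [fE6]; rw [hrep24]⟩
      · exact ⟨25, by simp only [fE6]; rw [hrep25]⟩
      · exact ⟨26, by simp only [fE6]; rw [hrep26]⟩
      · exact ⟨27, by simp only [fE6]; rw [hrep27]⟩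
      · exact ⟨28, by simp only [fE6]; rw [hrep28]⟩
      · exact ⟨29, by simp only [fE6]; rw [hrep29]⟩
      · exact ⟨30, by simp only [fE6]; rw [hrep30]⟩
      · exact ⟨31, by simp only [fE6]; rw [hrep31]⟩
      · exact ⟨32, by simp only [fE6]; rw [hrep32]⟩
      · exact ⟨33, by simp only [fE6]; rw [hrep33]⟩
      · exact ⟨34, by simp only [fE6]; rw [hrep34]⟩
      · exact ⟨35, by simp only [fE6]; rw [hrep35]⟩
  · rintro L ⟨i, rfl⟩
    show ray9 (repsE6 i) ∈ E6lines
    fin_cases i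
    · exact Set.mem_of_eq_of_mem (congrArg ray9 hrep0) (ray_mem_xi0 _ xis_mem0)
    · exact Set.mem_of_eq_of_mem (congrArg ray9 hrep1) (ray_mem_xi0 _ xis_mem1)
    · exact Set.mem_of_eq_of_mem (congrArg ray9 hrep2) (ray_mem_xi0 _ xis_mem2)
    · exact Set.mem_of_eq_of_mem (congrArg ray9 hrep3) (ray_mem_xi1 _ xis_mem0)
    · exact Set.mem_of_eq_of_mem (congrArg ray9 hrep4) (ray_mem_xi1 _ xis_mem1)
    · exact Set.mem_of_eq_of_mem (congrArg ray9 hrep5) (ray_mem_xi1 _ xis_mem2)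
    · exact Set.mem_of_eq_of_mem (congrArg ray9 hrep6) (ray_mem_xi2 _ xis_mem0)
    · exact Set.mem_of_eq_of_mem (congrArg ray9 hrep7) (ray_mem_xi2 _ xis_mem1)
    · exact Set.mem_of_eq_of_mem (congrArg ray9 hrep8) (ray_mem_xi2 _ xis_mem2)
    · exact Set.mem_of_eq_of_mem (congrArg ray9 hrep9) (ray_mem_eta _ _ _ etas_mem0 etas_mem0 etas_mem0)
    · exact Set.mem_of_eq_of_mem (congrArg ray9 hrep10) (ray_mem_eta _ _ _ etas_mem0 etas_mem0 etas_mem1)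
    · exact Set.mem_of_eq_of_mem (congrArg ray9 hrep11) (ray_mem_eta _ _ _ etas_mem0 etas_mem0 etas_mem2)
    · exact Set.mem_of_eq_of_mem (congrArg ray9 hrep12) (ray_mem_eta _ _ _ etas_mem0 etas_mem1 etas_mem0)
    · exact Set.mem_of_eq_of_mem (congrArg ray9 hrep13) (ray_mem_eta _ _ _ etas_mem0 etas_mem1 etas_mem1)
    · exact Set.mem_of_eq_of_mem (congrArg ray9 hrep14) (ray_mem_eta _ _ _ etas_mem0 etas_mem1 etas_mem2)
    · exact Set.mem_of_eq_of_mem (congrArg ray9 hrep15) (ray_mem_eta _ _ _ etas_mem0 etas_mem2 etas_mem0)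
    · exact Set.mem_of_eq_of_mem (congrArg ray9 hrep16) (ray_mem_eta _ _ _ etas_mem0 etas_mem2 etas_mem1)
    · exact Set.mem_of_eq_of_mem (congrArg ray9 hrep17) (ray_mem_eta _ _ _ etas_mem0 etas_mem2 etas_mem2)
    · exact Set.mem_of_eq_of_mem (congrArg ray9 hrep18) (ray_mem_eta _ _ _ etas_mem1 etas_mem0 etas_mem0)
    · exact Set.mem_of_eq_of_mem (congrArg ray9 hrep19) (ray_mem_eta _ _ _ etas_mem1 etas_mem0 etas_mem1)
    · exact Set.mem_of_eq_of_mem (congrArg ray9 hrep20) (ray_mem_eta _ _ _ etas_mem1 etas_mem0 etas_mem2)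
    · exact Set.mem_of_eq_of_mem (congrArg ray9 hrep21) (ray_mem_eta _ _ _ etas_mem1 etas_mem1 etas_mem0)
    · exact Set.mem_of_eq_of_mem (congrArg ray9 hrep22) (ray_mem_eta _ _ _ etas_mem1 etas_mem1 etas_mem1)
    · exact Set.mem_of_eq_of_mem (congrArg ray9 hrep23) (ray_mem_eta _ _ _ etas_mem1 etas_mem1 etas_mem2)
    · exact Set.mem_of_eq_of_mem (congrArg ray9 hrep24) (ray_mem_eta _ _ _ etas_mem1 etas_mem2 etas_mem0)
    · exact Set.mem_of_eq_of_mem (congrArg ray9 hrep25) (ray_mem_eta _ _ _ etas_mem1 etas_mem2 etas_mem1)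
    · exact Set.mem_of_eq_of_mem (congrArg ray9 hrep26) (ray_mem_eta _ _ _ etas_mem1 etas_mem2 etas_mem2)
    · exact Set.mem_of_eq_of_mem (congrArg ray9 hrep27) (ray_mem_eta _ _ _ etas_mem2 etas_mem0 etas_mem0)
    · exact Set.mem_of_eq_of_mem (congrArg ray9 hrep28) (ray_mem_eta _ _ _ etas_mem2 etas_mem0 etas_mem1)
    · exact Set.mem_of_eq_of_mem (congrArg ray9 hrep29) (ray_mem_eta _ _ _ etas_mem2 etas_mem0 etas_mem2)
    · exact Set.mem_of_eq_of_mem (congrArg ray9 hrep30) (ray_mem_eta _ _ _ etas_mem2 etas_mem1 etas_mem0)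
    · exact Set.mem_of_eq_of_mem (congrArg ray9 hrep31) (ray_mem_eta _ _ _ etas_mem2 etas_mem1 etas_mem1)
    · exact Set.mem_of_eq_of_mem (congrArg ray9 hrep32) (ray_mem_eta _ _ _ etas_mem2 etas_mem1 etas_mem2)
    · exact Set.mem_of_eq_of_mem (congrArg ray9 hrep33) (ray_mem_eta _ _ _ etas_mem2 etas_mem2 etas_mem0)
    · exact Set.mem_of_eq_of_mem (congrArg ray9 hrep34) (ray_mem_eta _ _ _ etas_mem2 etas_mem2 etas_mem1)
    · exact Set.mem_of_eq_of_mem (congrArg ray9 hrep35) (ray_mem_eta _ _ _ etas_mem2 etas_mem2 etas_mem2)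

lemma sort4 {T : Finset (Fin 36)} (h4 : T.card = 4) :
    ∃ a b c d : Fin 36, a < b ∧ b < c ∧ c < d ∧ T = {a, b, c, d} := by
  have hlen : (T.sort (· ≤ ·)).length = 4 := by rw [Finset.length_sort]; exact h4
  have hsort : (T.sort (· ≤ ·)).Pairwise (· < ·) := (Finset.sortedLT_sort T).pairwise
  have htf := Finset.sort_toFinset T (· ≤ ·)
  rcases e : T.sort (· ≤ ·) with - | ⟨a, - | ⟨b, - | ⟨c, - | ⟨d, - | ⟨x, l⟩⟩⟩⟩⟩ <;>
      rw [e] at hlen hsort htf <;> simp only [List.length_cons, List.length_nil] at hlen <;>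
    try omega
  simp only [List.pairwise_cons, List.mem_cons, List.mem_singleton, List.not_mem_nil,
    forall_eq_or_imp, forall_eq, List.Pairwise.nil, and_true, IsEmpty.forall_iff,
    implies_true] at hsort
  refine ⟨a, b, c, d, by tauto, by tauto, by tauto, by rw [← htf]; simp⟩

lemma sort5 {T : Finset (Fin 36)} (h5 : T.card = 5) :
    ∃ a b c d e : Fin 36, a < b ∧ b < c ∧ c < d ∧ d < e ∧ T = {a, b, c, d, e} := by
  have hlen : (T.sort (· ≤ ·)).length = 5 := by rw [Finset.length_sort]; exact h5
  have hsort : (T.sort (· ≤ ·)).Pairwise (· < ·) := (Finset.sortedLT_sort T).pairwise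
  have htf := Finset.sort_toFinset T (· ≤ ·)
  rcases e : T.sort (· ≤ ·) with - | ⟨a, - | ⟨b, - | ⟨c, - | ⟨d, - | ⟨e', - | ⟨x, l⟩⟩⟩⟩⟩⟩ <;>
      rw [e] at hlen hsort htf <;> simp only [List.length_cons, List.length_nil] at hlen <;>
    try omega
  simp only [List.pairwise_cons, List.mem_cons, List.mem_singleton, List.not_mem_nil,
    forall_eq_or_imp, forall_eq, List.Pairwise.nil, and_true, IsEmpty.forall_iff,
    implies_true] at hsort
  refine ⟨a, b, c, d, e', by tauto, by tauto, by tauto, by tauto, by rw [← htf]; simp⟩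

/-- the `E6` configuration contains exactly 135 sets of 4 mutually
orthogonal lines, no sets of 5 mutually orthogonal lines, and in particular is not
saturated (as a configuration in the 6-dimensional space `R`). -/
theorem stmt_13 :
    {S : Set (Submodule ℝ V9) | S ⊆ E6lines ∧ S.ncard = 4 ∧ S.Pairwise Perp9}.ncard
        = 135 ∧
    (¬ ∃ S : Set (Submodule ℝ V9),
        S ⊆ E6lines ∧ S.ncard = 5 ∧ S.Pairwise Perp9) ∧
    ¬ (∀ U ⊆ E6lines, U.Pairwise Perp9 →
        ∃ M, U ⊆ M ∧ M ⊆ E6lines ∧ M.ncard = 6 ∧ M.Pairwise Perp9) := by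
  
  classical
  have hperp : ∀ i j : Fin 36, Perp9 (fE6 i) (fE6 j) ↔ adjE6 i j = true := fun i j =>
    (perp_ray_iff _ _).trans (adj_iff i j).symm
  have hginj : Function.Injective (fun T : Finset (Fin 36) => fE6 '' (↑T : Set (Fin 36))) :=
    fun T T' h => Finset.coe_injective ((Set.image_injective.mpr fE6_inj) h)
  have hmemprops : ∀ T ∈ goodQuads,
      T.card = 4 ∧ ∀ i ∈ T, ∀ j ∈ T, i ≠ j → adjE6 i j = true := by
    intro T hT
    rw [← goodQuads_filter] at hT
    exact (Finset.mem_filter.mp hT).2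
  have hcomplete : ∀ T : Finset (Fin 36), T.card = 4 →
      (∀ i ∈ T, ∀ j ∈ T, i ≠ j → adjE6 i j = true) → T ∈ goodQuads := by
    intro T h4 hadj
    obtain ⟨a, b, c, d, hab, hbc, hcd, rfl⟩ := sort4 h4
    have ma : a ∈ ({a, b, c, d} : Finset (Fin 36)) := by simp
    have mb : b ∈ ({a, b, c, d} : Finset (Fin 36)) := by simp
    have mc : c ∈ ({a, b, c, d} : Finset (Fin 36)) := by simp
    have md : d ∈ ({a, b, c, d} : Finset (Fin 36)) := by simp
    exact (bigP a b hab (hadj a ma b mb hab.ne)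
      c hbc (hadj a ma c mc (hab.trans hbc).ne) (hadj b mb c mc hbc.ne)
      d hcd (hadj a ma d md ((hab.trans hbc).trans hcd).ne)
      (hadj b mb d md (hbc.trans hcd).ne) (hadj c mc d md hcd.ne)).1
  have hno5 : ∀ T : Finset (Fin 36), T.card = 5 →
      ¬ (∀ i ∈ T, ∀ j ∈ T, i ≠ j → adjE6 i j = true) := by
    intro T h5 hadj
    obtain ⟨a, b, c, d, e, hab, hbc, hcd, hde, rfl⟩ := sort5 h5
    have ma : a ∈ ({a, b, c, d, e} : Finset (Fin 36)) := by simp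
    have mb : b ∈ ({a, b, c, d, e} : Finset (Fin 36)) := by simp
    have mc : c ∈ ({a, b, c, d, e} : Finset (Fin 36)) := by simp
    have md : d ∈ ({a, b, c, d, e} : Finset (Fin 36)) := by simp
    have me : e ∈ ({a, b, c, d, e} : Finset (Fin 36)) := by simp
    refine (bigP a b hab (hadj a ma b mb hab.ne)
      c hbc (hadj a ma c mc (hab.trans hbc).ne) (hadj b mb c mc hbc.ne)
      d hcd (hadj a ma d md ((hab.trans hbc).trans hcd).ne)
      (hadj b mb d md (hbc.trans hcd).ne) (hadj c mc d md hcd.ne)).2 e hde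
      ⟨hadj a ma e me (((hab.trans hbc).trans hcd).trans hde).ne,
       hadj b mb e me ((hbc.trans hcd).trans hde).ne,
       hadj c mc e me ((hcd.trans hde).ne),
       hadj d md e me hde.ne⟩
  have hextract : ∀ S : Set (Submodule ℝ V9), S ⊆ E6lines → S.Pairwise Perp9 →
      ∃ T : Finset (Fin 36), S = fE6 '' (↑T : Set (Fin 36)) ∧ S.ncard = T.card ∧
        (∀ i ∈ T, ∀ j ∈ T, i ≠ j → adjE6 i j = true) := by
    intro S hSE hSP
    have hST : S = fE6 '' ((↑(Finset.univ.filter (fun i => fE6 i ∈ S)) : Set (Fin 36))) := by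
      ext L
      constructor
      · intro hL
        have hmem := hSE hL
        rw [E6lines_eq] at hmem
        obtain ⟨i, rfl⟩ := hmem
        exact ⟨i, by simp [hL], rfl⟩
      · rintro ⟨i, hi, rfl⟩
        exact (Finset.mem_filter.mp (Finset.mem_coe.mp hi)).2
    refine ⟨Finset.univ.filter (fun i => fE6 i ∈ S), hST, ?_, ?_⟩
    · conv_lhs => rw [hST]
      rw [Set.ncard_image_of_injective _ fE6_inj, Set.ncard_coe_finset]
    · intro i hi j hj hij
      exact (hperp i j).mp
        (hSP (Finset.mem_filter.mp hi).2 (Finset.mem_filter.mp hj).2 (fE6_inj.ne hij))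
  have hseteq : {S : Set (Submodule ℝ V9) | S ⊆ E6lines ∧ S.ncard = 4 ∧ S.Pairwise Perp9}
      = (fun T : Finset (Fin 36) => fE6 '' (↑T : Set (Fin 36))) '' (↑goodQuads) := by
    ext S
    simp only [Set.mem_setOf_eq, Set.mem_image, Finset.mem_coe]
    constructor
    · rintro ⟨hSE, hc4, hSP⟩
      obtain ⟨T, hST, hcard, hadj⟩ := hextract S hSE hSP
      exact ⟨T, hcomplete T (by rw [← hcard]; exact hc4) hadj, hST.symm⟩
    · rintro ⟨T, hT, rfl⟩
      obtain ⟨hc4, hadj⟩ := hmemprops T hT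
      refine ⟨?_, ?_, ?_⟩
      · rw [E6lines_eq]
        exact Set.image_subset_range _ _
      · rw [Set.ncard_image_of_injective _ fE6_inj, Set.ncard_coe_finset, hc4]
      · rintro x ⟨i, hi, rfl⟩ y ⟨j, hj, rfl⟩ hxy
        exact (hperp i j).mpr
          (hadj i (Finset.mem_coe.mp hi) j (Finset.mem_coe.mp hj) (fun h => hxy (by rw [h])))
  have h135 : {S : Set (Submodule ℝ V9) | S ⊆ E6lines ∧ S.ncard = 4 ∧ S.Pairwise Perp9}.ncard
      = 135 := by
    rw [hseteq, Set.ncard_image_of_injective _ hginj, Set.ncard_coe_finset, goodQuads_card]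
  have hno5sets : ¬ ∃ S : Set (Submodule ℝ V9),
      S ⊆ E6lines ∧ S.ncard = 5 ∧ S.Pairwise Perp9 := by
    rintro ⟨S, hSE, hc5, hSP⟩
    obtain ⟨T, hST, hcard, hadj⟩ := hextract S hSE hSP
    exact hno5 T (by rw [← hcard]; exact hc5) hadj
  refine ⟨h135, hno5sets, fun h => ?_⟩
  obtain ⟨M, -, hME, hM6, hMP⟩ := h ∅ (Set.empty_subset _) (Set.pairwise_empty _)
  obtain ⟨S, hSM, hS5⟩ := Set.exists_subset_card_eq (show 5 ≤ M.ncard by rw [hM6]; norm_num)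
  exact hno5sets ⟨S, hSM.trans hME, hS5, hMP.mono hSM⟩
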